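/- Let P₁ ≥ 0, P₂ ≥ 0 and a, b, c be real numbers, and let C(x) = (1/2)·log₂(1 + x). For real parameters α, β, γ, δ, θ, μ, ρ write M = μ²(1−ρ²), K = α + bμρ, and define I₂ = C(c²β²/(c²γ² + c²δ² + 1)), I₅ = C((γ² + δ²)/(b²M + 1)), I₆ = C((β² + γ² + δ²)/(b²M + 1)) + C(K²/(β² + γ² + δ² + b²θ² + b²M + 1)). Define S₁ = { min(I₂ + I₅, I₆) : α² + β² + γ² + δ² ≤ P₁, θ² + μ² ≤ P₂, ρ² ≤ 1 } and S₂ = { min( C(c²β²/(c²γ²+1)) + C(γ²), C((α + b·√P₂)² + β² + γ²) ) : α² + β² + γ² ≤ P₁ }. Then sSup S₁ = sSup S₂. -/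

import Mathlib

set_option maxHeartbeats 1000000

private lemma Cmono' {x y : ℝ} (hx : 0 ≤ x) (h : x ≤ y) :
    (1/2) * Real.logb 2 (1+x) ≤ (1/2) * Real.logb 2 (1+y) := by
  gcongr <;> linarith

private lemma Csum' (x k : ℝ) (hx : 0 ≤ x) :
    (1/2) * Real.logb 2 (1+x) + (1/2) * Real.logb 2 (1 + k^2/(x+1))
      = (1/2) * Real.logb 2 (1+(x+k^2)) := by
  have h1 : (0:ℝ) < 1 + x := by linarith
  have h2 : (0:ℝ) < 1 + k^2/(x+1) := by positivity
  rw [← mul_add, ← Real.logb_mul (by positivity) (by positivity)]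
  congr 2
  field_simp
  ring

/-- Section IV-D: the maximum rate for user 1 in the full-duplex Gaussian
Han-Kobayashi PDF-binning region equals the partial decode-forward relaying
rate of equation (25). -/
theorem FD_HK_PDF_binning_maxR1 (P₁ P₂ a b c : ℝ) (hP₁ : 0 ≤ P₁) (hP₂ : 0 ≤ P₂) :
    let C : ℝ → ℝ := fun x => (1 / 2) * Real.logb 2 (1 + x)
    let S₁ : Set ℝ := {r | ∃ α β γ δ θ μ ρ : ℝ,
      α ^ 2 + β ^ 2 + γ ^ 2 + δ ^ 2 ≤ P₁ ∧ θ ^ 2 + μ ^ 2 ≤ P₂ ∧ ρ ^ 2 ≤ 1 ∧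
      (let M : ℝ := μ ^ 2 * (1 - ρ ^ 2)
       let K : ℝ := α + b * μ * ρ
       let I₂ : ℝ := C (c ^ 2 * β ^ 2 / (c ^ 2 * γ ^ 2 + c ^ 2 * δ ^ 2 + 1))
       let I₅ : ℝ := C ((γ ^ 2 + δ ^ 2) / (b ^ 2 * M + 1))
       let I₆ : ℝ := C ((β ^ 2 + γ ^ 2 + δ ^ 2) / (b ^ 2 * M + 1)) +
         C (K ^ 2 / (β ^ 2 + γ ^ 2 + δ ^ 2 + b ^ 2 * θ ^ 2 + b ^ 2 * M + 1))
       r = min (I₂ + I₅) I₆)}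
    let S₂ : Set ℝ := {r | ∃ α β γ : ℝ,
      α ^ 2 + β ^ 2 + γ ^ 2 ≤ P₁ ∧
      r = min
        (C (c ^ 2 * β ^ 2 / (c ^ 2 * γ ^ 2 + 1)) + C (γ ^ 2))
        (C ((α + b * Real.sqrt P₂) ^ 2 + β ^ 2 + γ ^ 2))}
    sSup S₁ = sSup S₂ := by
  intro C S₁ S₂
  have hC : ∀ x, C x = (1/2) * Real.logb 2 (1+x) := fun x => by norm_num [C]
  have hCmono : ∀ x y : ℝ, 0 ≤ x → x ≤ y → C x ≤ C y := by
    intro x y hx h; rw [hC, hC]; exact Cmono' hx h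
  have hCsum : ∀ x k : ℝ, 0 ≤ x → C x + C (k^2/(x+1)) = C (x+k^2) := by
    intro x k hx; rw [hC, hC, hC]; exact Csum' x k hx
  have hsq : Real.sqrt P₂ ^ 2 = P₂ := Real.sq_sqrt hP₂
  -- S₂ ⊆ S₁
  have hsub : S₂ ⊆ S₁ := by
    rintro r ⟨α, β, γ, hfeas, rfl⟩
    refine ⟨α, β, γ, 0, 0, Real.sqrt P₂, 1, by nlinarith, by nlinarith, by norm_num, ?_⟩
    simp only [hsq]
    norm_num
    have e2 : C (β ^ 2 + γ ^ 2) + C ((α + b * Real.sqrt P₂) ^ 2 / (β ^ 2 + γ ^ 2 + 1))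
        = C ((α + b * Real.sqrt P₂) ^ 2 + β ^ 2 + γ ^ 2) := by
      have := hCsum (β ^ 2 + γ ^ 2) (α + b * Real.sqrt P₂) (by positivity)
      rw [show β ^ 2 + γ ^ 2 + (α + b * Real.sqrt P₂) ^ 2
            = (α + b * Real.sqrt P₂) ^ 2 + β ^ 2 + γ ^ 2 by ring] at this
      exact this
    rw [e2]
  -- uniform bound
  set B : ℝ := C ((Real.sqrt P₁ + |b| * Real.sqrt P₂) ^ 2 + P₁) with hB
  have hB2 : ∀ s ∈ S₂, s ≤ B := by
    rintro s ⟨α, β, γ, hfeas, rfl⟩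
    refine (min_le_right _ _).trans (hCmono _ _ (by positivity) ?_)
    have hα : |α| ≤ Real.sqrt P₁ := by
      rw [← Real.sqrt_sq_eq_abs]
      exact Real.sqrt_le_sqrt (by nlinarith)
    have habs : |α + b * Real.sqrt P₂| ≤ Real.sqrt P₁ + |b| * Real.sqrt P₂ := by
      calc |α + b * Real.sqrt P₂| ≤ |α| + |b * Real.sqrt P₂| := abs_add_le _ _
        _ = |α| + |b| * Real.sqrt P₂ := by
            rw [abs_mul, abs_of_nonneg (Real.sqrt_nonneg _)]
        _ ≤ Real.sqrt P₁ + |b| * Real.sqrt P₂ := by linarith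
    have hsq2 : (α + b * Real.sqrt P₂) ^ 2 ≤ (Real.sqrt P₁ + |b| * Real.sqrt P₂) ^ 2 := by
      rw [← sq_abs (α + b * Real.sqrt P₂)]
      exact pow_le_pow_left₀ (abs_nonneg _) habs 2
    nlinarith
  -- every element of S₁ is dominated by an element of S₂
  have hdom : ∀ r ∈ S₁, ∃ s ∈ S₂, r ≤ s := by
    rintro r ⟨α, β, γ, δ, θ, μ, ρ, h1, h2, h3, rfl⟩
    set g : ℝ := Real.sqrt (γ ^ 2 + δ ^ 2) with hgdef
    have hg2 : g ^ 2 = γ ^ 2 + δ ^ 2 := Real.sq_sqrt (by positivity)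
    set a' : ℝ := if 0 ≤ b then |α| else -|α| with ha'def
    have ha'2 : a' ^ 2 = α ^ 2 := by
      rw [ha'def]; split_ifs <;> simp [sq_abs]
    have hM : 0 ≤ μ ^ 2 * (1 - ρ ^ 2) := mul_nonneg (sq_nonneg μ) (by linarith)
    have hden : (1:ℝ) ≤ b ^ 2 * (μ ^ 2 * (1 - ρ ^ 2)) + 1 := by
      nlinarith [mul_nonneg (sq_nonneg b) hM]
    have hdenpos : (0:ℝ) < b ^ 2 * (μ ^ 2 * (1 - ρ ^ 2)) + 1 := by linarith
    -- |μρ| ≤ √P₂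
    have hμρ : |μ * ρ| ≤ Real.sqrt P₂ := by
      rw [← Real.sqrt_sq_eq_abs]
      exact Real.sqrt_le_sqrt (by nlinarith)
    have habs : |α + b * μ * ρ| ≤ |α| + |b| * Real.sqrt P₂ := by
      calc |α + b * μ * ρ| = |α + b * (μ * ρ)| := by ring_nf
        _ ≤ |α| + |b * (μ * ρ)| := abs_add_le _ _
        _ = |α| + |b| * |μ * ρ| := by rw [abs_mul]
        _ ≤ |α| + |b| * Real.sqrt P₂ := by
            have := mul_le_mul_of_nonneg_left hμρ (abs_nonneg b); linarith
    have ha'eq : (a' + b * Real.sqrt P₂) ^ 2 = (|α| + |b| * Real.sqrt P₂) ^ 2 := by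
      rw [ha'def]; split_ifs with hb
      · rw [abs_of_nonneg hb]
      · rw [abs_of_neg (lt_of_not_ge hb)]; ring
    have hK : (α + b * μ * ρ) ^ 2 ≤ (a' + b * Real.sqrt P₂) ^ 2 := by
      rw [ha'eq, ← sq_abs (α + b * μ * ρ)]
      exact pow_le_pow_left₀ (abs_nonneg _) habs 2
    refine ⟨_, ⟨a', β, g, by nlinarith, rfl⟩, ?_⟩
    apply min_le_min
    · -- I₂ + I₅ ≤ T1
      have e2 : c ^ 2 * β ^ 2 / (c ^ 2 * γ ^ 2 + c ^ 2 * δ ^ 2 + 1)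
          = c ^ 2 * β ^ 2 / (c ^ 2 * g ^ 2 + 1) := by rw [hg2]; ring_nf
      rw [e2]
      refine add_le_add le_rfl (hCmono _ _ (by positivity) ?_)
      calc (γ ^ 2 + δ ^ 2) / (b ^ 2 * (μ ^ 2 * (1 - ρ ^ 2)) + 1)
          ≤ (γ ^ 2 + δ ^ 2) / 1 := by
            apply div_le_div_of_nonneg_left (by positivity) one_pos hden
        _ = g ^ 2 := by rw [hg2]; ring
    · -- I₆ ≤ T2
      have hs : β ^ 2 + γ ^ 2 + δ ^ 2 = β ^ 2 + g ^ 2 := by rw [hg2]; ring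
      calc C ((β ^ 2 + γ ^ 2 + δ ^ 2) / (b ^ 2 * (μ ^ 2 * (1 - ρ ^ 2)) + 1))
            + C ((α + b * μ * ρ) ^ 2 /
              (β ^ 2 + γ ^ 2 + δ ^ 2 + b ^ 2 * θ ^ 2 + b ^ 2 * (μ ^ 2 * (1 - ρ ^ 2)) + 1))
          ≤ C (β ^ 2 + g ^ 2)
            + C ((α + b * μ * ρ) ^ 2 / ((β ^ 2 + g ^ 2) + 1)) := by
            apply add_le_add
            · apply hCmono _ _ (by positivity)
              calc (β ^ 2 + γ ^ 2 + δ ^ 2) / (b ^ 2 * (μ ^ 2 * (1 - ρ ^ 2)) + 1)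
                  ≤ (β ^ 2 + γ ^ 2 + δ ^ 2) / 1 :=
                    div_le_div_of_nonneg_left (by positivity) one_pos hden
                _ = β ^ 2 + g ^ 2 := by rw [hg2]; ring
            · apply hCmono _ _ (by positivity)
              apply div_le_div_of_nonneg_left (sq_nonneg _)
                (by positivity)
              nlinarith [sq_nonneg θ, mul_nonneg (sq_nonneg b) hM,
                mul_nonneg (sq_nonneg b) (sq_nonneg θ)]
        _ = C ((β ^ 2 + g ^ 2) + (α + b * μ * ρ) ^ 2) :=
            hCsum (β ^ 2 + g ^ 2) (α + b * μ * ρ) (by positivity)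
        _ ≤ C ((a' + b * Real.sqrt P₂) ^ 2 + β ^ 2 + g ^ 2) := by
            apply hCmono _ _ (by positivity); nlinarith
  -- nonemptiness
  have hne2 : S₂.Nonempty := ⟨_, 0, 0, 0, by simpa using hP₁, rfl⟩
  have hne1 : S₁.Nonempty := hne2.imp fun x hx => hsub hx
  have hbdd2 : BddAbove S₂ := ⟨B, fun s hs => hB2 s hs⟩
  apply le_antisymm
  · apply csSup_le hne1
    intro r hr
    obtain ⟨s, hs, hrs⟩ := hdom r hr
    exact hrs.trans (le_csSup hbdd2 hs)
  · refine csSup_le_csSup ?_ hne2 hsub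
    refine ⟨B, fun r hr => ?_⟩
    obtain ⟨s, hs, hrs⟩ := hdom r hr
    exact hrs.trans (hB2 s hs)
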